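/- Let p, w, v ∈ ℝ⁴ with ⟨p,p⟩ = 0 and ⟨p,w⟩ = 0. On Ω = {e ∈ ℝ⁴ : ⟨e,p⟩ ≠ 0} define ũ(e) := exp(−i·⟨e,w⟩/⟨e,p⟩) and h(e) := ⟨v,w⟩ − ⟨e,w⟩·⟨v,p⟩/⟨e,p⟩. Then for every r ∈ ℕ and every e ∈ Ω: r·⟨v,p⟩·h(e)^r·ũ(e) + ⟨e,p⟩·D_v( h^r·ũ )(e) = −i·h(e)^{r+1}·ũ(e). (The momentum-space recursion −i(vᵗJ_e(p)E_p(k))^{r+1}ũ = (r(vp)+(ep)(v∂_e))(vᵗJ_e(p)E_p(k))^r ũ proved for Proposition 2.3, which defines the rank-(r+1) intertwiners from the rank-r ones.) -/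

import Mathlib

noncomputable section

/-- Minkowski bilinear form on ℝ⁴. -/
def mink (a b : Fin 4 → ℝ) : ℝ := a 0 * b 0 - a 1 * b 1 - a 2 * b 2 - a 3 * b 3

/-- Directional derivative `D_v f(e) = (d/dt) f(e+tv)|_{t=0}`. -/
def Dv (v : Fin 4 → ℝ) (f : (Fin 4 → ℝ) → ℂ) (e : Fin 4 → ℝ) : ℂ :=
  deriv (fun t : ℝ => f (e + t • v)) 0

/-- The intertwiner `ũ(e) = exp(−i⟨e,w⟩/⟨e,p⟩)`. -/
def util (p w : Fin 4 → ℝ) (e : Fin 4 → ℝ) : ℂ :=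
  Complex.exp (-Complex.I * ((mink e w : ℝ) : ℂ) / ((mink e p : ℝ) : ℂ))

/-- `h(e) = ⟨v,w⟩ − ⟨e,w⟩⟨v,p⟩/⟨e,p⟩ = ⟨v, J_e(p)w⟩`. -/
def hfun (p w v : Fin 4 → ℝ) (e : Fin 4 → ℝ) : ℝ :=
  mink v w - mink e w * mink v p / mink e p

lemma mink_add_smul (e v x : Fin 4 → ℝ) (t : ℝ) :
    mink (e + t • v) x = mink e x + t * mink v x := by
  simp only [mink, Pi.add_apply, Pi.smul_apply, smul_eq_mul]; ring

/-- The momentum-space recursion proved for Proposition 2.3, defining the rank-(r+1)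
intertwiners from the rank-r ones. -/
theorem intertwiner_recursion (p w v : Fin 4 → ℝ) (hpp : mink p p = 0)
    (hpw : mink p w = 0) :
    ∀ (r : ℕ) (e : Fin 4 → ℝ), mink e p ≠ 0 →
      (r : ℂ) * ((mink v p : ℝ) : ℂ) * ((hfun p w v e : ℝ) : ℂ) ^ r * util p w e +
          ((mink e p : ℝ) : ℂ) *
            Dv v (fun e' => ((hfun p w v e' : ℝ) : ℂ) ^ r * util p w e') e =
        -Complex.I * ((hfun p w v e : ℝ) : ℂ) ^ (r + 1) * util p w e := by
  intro r e he
  set A : ℂ := ((mink e w : ℝ) : ℂ) with hA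
  set B : ℂ := ((mink v w : ℝ) : ℂ) with hB
  set C : ℂ := ((mink v p : ℝ) : ℂ) with hC
  set D : ℂ := ((mink e p : ℝ) : ℂ) with hD
  have hD0 : D ≠ 0 := Complex.ofReal_ne_zero.2 he
  set g : ℂ → ℂ := fun z =>
    (B - (A + z * B) * C / (D + z * C)) ^ r *
      Complex.exp (-Complex.I * (A + z * B) / (D + z * C)) with hg
  -- derivative pieces
  have hnum : HasDerivAt (fun z : ℂ => (A + z * B) * C) (B * C) 0 := by
    simpa using (((hasDerivAt_id (0:ℂ)).mul_const B).const_add A).mul_const C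
  have hden : HasDerivAt (fun z : ℂ => D + z * C) C 0 := by
    simpa using ((hasDerivAt_id (0:ℂ)).mul_const C).const_add D
  have hden0 : (fun z : ℂ => D + z * C) 0 ≠ 0 := by simpa using hD0
  have hq : HasDerivAt (fun z : ℂ => (A + z * B) * C / (D + z * C))
      ((B * C * D - A * C * C) / D ^ 2) 0 := by
    have := hnum.fun_div hden hden0
    simpa using this
  have hF : HasDerivAt (fun z : ℂ => (B - (A + z * B) * C / (D + z * C)) ^ r)
      ((r : ℂ) * (B - A * C / D) ^ (r - 1) * (-((B * C * D - A * C * C) / D ^ 2))) 0 := by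
    have := ((hasDerivAt_const (0:ℂ) B).fun_sub hq).fun_pow r
    simpa using this
  have hnum2 : HasDerivAt (fun z : ℂ => -Complex.I * (A + z * B)) (-Complex.I * B) 0 := by
    simpa using (((hasDerivAt_id (0:ℂ)).mul_const B).const_add A).const_mul (-Complex.I)
  have hinner : HasDerivAt (fun z : ℂ => -Complex.I * (A + z * B) / (D + z * C))
      ((-Complex.I * B * D - -Complex.I * A * C) / D ^ 2) 0 := by
    have := hnum2.fun_div hden hden0
    simpa using this
  have hG : HasDerivAt (fun z : ℂ => Complex.exp (-Complex.I * (A + z * B) / (D + z * C)))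
      (Complex.exp (-Complex.I * A / D) * ((-Complex.I * B * D - -Complex.I * A * C) / D ^ 2)) 0 := by
    have := hinner.cexp
    simpa using this
  have hgd : HasDerivAt g
      ((r : ℂ) * (B - A * C / D) ^ (r - 1) * (-((B * C * D - A * C * C) / D ^ 2)) *
          Complex.exp (-Complex.I * A / D) +
        (B - A * C / D) ^ r *
          (Complex.exp (-Complex.I * A / D) * ((-Complex.I * B * D - -Complex.I * A * C) / D ^ 2))) 0 := by
    have := hF.fun_mul hG
    simpa [hg] using this
  -- the real-parameter function equals g ∘ ofReal
  have hfeq : (fun t : ℝ => ((hfun p w v (e + t • v) : ℝ) : ℂ) ^ r * util p w (e + t • v))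
      = fun t : ℝ => g (t : ℂ) := by
    funext t
    simp only [hg, hfun, util, mink_add_smul]
    push_cast
    simp only [hA, hB, hC, hD]
  have hDv : Dv v (fun e' => ((hfun p w v e' : ℝ) : ℂ) ^ r * util p w e') e
      = (r : ℂ) * (B - A * C / D) ^ (r - 1) * (-((B * C * D - A * C * C) / D ^ 2)) *
          Complex.exp (-Complex.I * A / D) +
        (B - A * C / D) ^ r *
          (Complex.exp (-Complex.I * A / D) * ((-Complex.I * B * D - -Complex.I * A * C) / D ^ 2)) := by
    rw [Dv, hfeq]
    exact (hgd.comp_ofReal).deriv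
  have e1 : (B * C * D - A * C * C) / D ^ 2 = C * (B - A * C / D) / D := by
    field_simp
  have e2 : (-Complex.I * B * D - -Complex.I * A * C) / D ^ 2
      = -Complex.I * (B - A * C / D) / D := by
    field_simp; ring
  rw [e1, e2] at hDv
  rw [hDv]
  have hcast : ((hfun p w v e : ℝ) : ℂ) = B - A * C / D := by
    simp only [hfun]; push_cast; ring
  have hutil : util p w e = Complex.exp (-Complex.I * A / D) := rfl
  rw [hcast, hutil]
  set h0 : ℂ := B - A * C / D
  set E : ℂ := Complex.exp (-Complex.I * A / D)
  rcases r with _ | n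
  · simp only [Nat.cast_zero, pow_zero, zero_mul, zero_add, Nat.zero_sub,
      mul_one, one_mul, zero_pow, pow_one]
    field_simp
  · have hpow : h0 ^ (n + 1 - 1) = h0 ^ n := rfl
    rw [hpow]
    field_simp
    ring
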